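/- Let A ∈ ℝ^{m×n} with k + 1 ≤ min(m,n) be partitioned in blocks A = [[A11, A12],[A21, A22]] with A11 ∈ ℝ^{k×k} invertible, and let S(A11) = A22 − A21·A11⁻¹·A12. Suppose that for some μ, ν ≥ 1: (1) σ_k(A) ≤ μ·σ_k(A11); (2) ‖S(A11)‖₂ ≤ μ·σ_{k+1}(A); and (3) ‖A21A11⁻¹‖_max ≤ ν and ‖A11⁻¹A12‖_max ≤ ν. Then A11 is a near-local maximum volume k×k submatrix of A with parameter γ ≤ ν² + μ²: for every k×k submatrix Â11 of A that differs from A11 in at most one row and at most one column, vol(Â11) ≤ (ν² + μ²)·vol(A11). -/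

import Mathlib

open Matrix

/-- The spectral norm (`‖·‖₂`, largest singular value) of a real matrix. -/
noncomputable def specNorm {m n : Type*} [Fintype m] [Fintype n] [DecidableEq n]
    (A : Matrix m n ℝ) : ℝ :=
  ‖LinearMap.toContinuousLinearMap (Matrix.toEuclideanLin A)‖

/-- `sval A j` is the `j`-th largest singular value of `A` (1-indexed), characterized as the
distance, in the spectral norm, from `A` to the set of matrices of rank `< j`. -/
noncomputable def sval {m n : Type*} [Fintype m] [Fintype n] [DecidableEq n]
    (A : Matrix m n ℝ) (j : ℕ) : ℝ :=
  sInf {x : ℝ | ∃ B : Matrix m n ℝ, B.rank < j ∧ x = specNorm (A - B)}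

/-- The volume of a matrix: the product of its singular values. -/
noncomputable def vol {m n : Type*} [Fintype m] [Fintype n] [DecidableEq n]
    (A : Matrix m n ℝ) : ℝ :=
  ∏ j ∈ Finset.Icc 1 (min (Fintype.card m) (Fintype.card n)), sval A j

/-- `DiffOne b r` : `r` is an injective selection of indices whose image (index set)
differs from the index set selected by `b` in at most one element. -/
def DiffOne {ι α : Type*} [Fintype ι] [DecidableEq α] (b r : ι → α) : Prop :=
  Function.Injective r ∧ (Finset.univ.image r \ Finset.univ.image b).card ≤ 1

section SpecNorm
variable {m n : Type*} [Fintype m] [Fintype n] [DecidableEq n]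

lemma specNorm_nonneg (A : Matrix m n ℝ) : 0 ≤ specNorm A := norm_nonneg _

lemma norm_apply_le (A : Matrix m n ℝ) (x : EuclideanSpace ℝ n) :
    ‖Matrix.toEuclideanLin A x‖ ≤ specNorm A * ‖x‖ :=
  (LinearMap.toContinuousLinearMap (Matrix.toEuclideanLin A)).le_opNorm x

lemma specNorm_le_bound (A : Matrix m n ℝ) {c : ℝ} (hc : 0 ≤ c)
    (h : ∀ x : EuclideanSpace ℝ n, ‖Matrix.toEuclideanLin A x‖ ≤ c * ‖x‖) :
    specNorm A ≤ c :=
  ContinuousLinearMap.opNorm_le_bound _ hc h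

lemma abs_coord_le_norm (x : EuclideanSpace ℝ m) (i : m) : |x i| ≤ ‖x‖ := by
  letI := Classical.decEq m
  have h := abs_real_inner_le_norm (EuclideanSpace.single i (1:ℝ)) x
  rwa [EuclideanSpace.inner_single_left, EuclideanSpace.norm_single, norm_one, one_mul,
    starRingEnd_apply, star_one, one_mul] at h

lemma abs_entry_le_specNorm (A : Matrix m n ℝ) (i : m) (j : n) : |A i j| ≤ specNorm A := by
  letI := Classical.decEq m
  have h1 : ‖Matrix.toEuclideanLin A (EuclideanSpace.single j 1)‖ ≤ specNorm A := by
    have := norm_apply_le A (EuclideanSpace.single j 1)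
    rwa [EuclideanSpace.norm_single, norm_one, mul_one] at this
  refine le_trans ?_ h1
  have h2 : (Matrix.toEuclideanLin A (EuclideanSpace.single j 1)) i = A i j := by
    simp [Matrix.toEuclideanLin_apply, Matrix.mulVec_single]
  calc |A i j| = |(Matrix.toEuclideanLin A (EuclideanSpace.single j 1)) i| := by rw [h2]
    _ ≤ _ := abs_coord_le_norm _ i
end SpecNorm

section Sval
variable {m n : Type*} [Fintype m] [Fintype n] [DecidableEq n]

lemma svalSet_bddBelow (A : Matrix m n ℝ) (j : ℕ) :
    BddBelow {x : ℝ | ∃ B : Matrix m n ℝ, B.rank < j ∧ x = specNorm (A - B)} := by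
  refine ⟨0, fun x hx => ?_⟩
  obtain ⟨B, -, rfl⟩ := hx
  exact specNorm_nonneg _

lemma svalSet_nonempty (A : Matrix m n ℝ) {j : ℕ} (hj : 1 ≤ j) :
    Set.Nonempty {x : ℝ | ∃ B : Matrix m n ℝ, B.rank < j ∧ x = specNorm (A - B)} :=
  ⟨specNorm (A - 0), 0, by simp; omega, rfl⟩

lemma sval_le (A : Matrix m n ℝ) {j : ℕ} (B : Matrix m n ℝ) (h : B.rank < j) :
    sval A j ≤ specNorm (A - B) :=
  csInf_le (svalSet_bddBelow A j) ⟨B, h, rfl⟩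

lemma le_sval (A : Matrix m n ℝ) {j : ℕ} (hj : 1 ≤ j) {c : ℝ}
    (h : ∀ B : Matrix m n ℝ, B.rank < j → c ≤ specNorm (A - B)) : c ≤ sval A j := by
  refine le_csInf (svalSet_nonempty A hj) ?_
  rintro x ⟨B, hB, rfl⟩
  exact h B hB

lemma sval_nonneg (A : Matrix m n ℝ) {j : ℕ} (hj : 1 ≤ j) : 0 ≤ sval A j :=
  le_csInf (svalSet_nonempty A hj) (by rintro x ⟨B, -, rfl⟩; exact specNorm_nonneg _)

lemma sval_succ_le (A : Matrix m n ℝ) {j : ℕ} (hj : 1 ≤ j) : sval A (j + 1) ≤ sval A j := by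
  refine csInf_le_csInf (svalSet_bddBelow A _) (svalSet_nonempty A hj) ?_
  rintro x ⟨B, hB, rfl⟩
  exact ⟨B, hB.trans (Nat.lt_succ_self j), rfl⟩
end Sval

variable {d : ℕ} (M : Matrix (Fin d) (Fin d) ℝ)

noncomputable abbrev gramHerm : (Mᴴ * M).IsHermitian := isHermitian_conjTranspose_mul_self M
noncomputable def sPerm : Equiv.Perm (Fin d) := Tuple.sort (fun a => -(gramHerm M).eigenvalues a)
noncomputable def sEig : Fin d → ℝ := fun a => (gramHerm M).eigenvalues (sPerm M a)

lemma sEig_anti : Antitone (sEig M) := by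
  intro a b hab
  have := Tuple.monotone_sort (fun a => -(gramHerm M).eigenvalues a) hab
  simp only [Function.comp_apply] at this
  simpa [sEig, sPerm] using neg_le_neg_iff.mp this

lemma sEig_nonneg (a : Fin d) : 0 ≤ sEig M a :=
  (posSemidef_conjTranspose_mul_self M).eigenvalues_nonneg _

noncomputable def sBasis : OrthonormalBasis (Fin d) ℝ (EuclideanSpace ℝ (Fin d)) :=
  (gramHerm M).eigenvectorBasis.reindex (sPerm M).symm

lemma sBasis_apply (a : Fin d) : sBasis M a = (gramHerm M).eigenvectorBasis (sPerm M a) := by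
  simp [sBasis]

lemma toEuclideanLin_mul {l m n : Type*} [Fintype l] [Fintype m] [Fintype n]
    [DecidableEq m] [DecidableEq n] (A : Matrix l m ℝ) (B : Matrix m n ℝ) :
    Matrix.toEuclideanLin (A * B) =
      (Matrix.toEuclideanLin A).comp (Matrix.toEuclideanLin B) := by
  ext x i
  simp [Matrix.toEuclideanLin_apply, Matrix.mulVec_mulVec]

lemma toEuclideanLin_one {n : Type*} [Fintype n] [DecidableEq n] :
    Matrix.toEuclideanLin (1 : Matrix n n ℝ) = LinearMap.id := by
  ext x i
  simp [Matrix.toEuclideanLin_apply]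

lemma sBasis_eigen (a : Fin d) :
    Matrix.toEuclideanLin (Mᴴ * M) (sBasis M a) = sEig M a • sBasis M a := by
  have h := (gramHerm M).mulVec_eigenvectorBasis (sPerm M a)
  ext i
  have := congrFun h i
  simp only [Pi.smul_apply, smul_eq_mul] at this
  simp only [Matrix.toEuclideanLin_apply, sBasis_apply]
  exact this


local notation "⟪" x ", " y "⟫" => @inner ℝ _ _ x y

lemma inner_gram (x y : EuclideanSpace ℝ (Fin d)) :
    ⟪Matrix.toEuclideanLin M x, Matrix.toEuclideanLin M y⟫ =
      ⟪x, Matrix.toEuclideanLin (Mᴴ * M) y⟫ := by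
  rw [toEuclideanLin_mul, LinearMap.comp_apply, Matrix.toEuclideanLin_conjTranspose_eq_adjoint,
    LinearMap.adjoint_inner_right]

lemma gram_selfadjoint (x y : EuclideanSpace ℝ (Fin d)) :
    ⟪Matrix.toEuclideanLin (Mᴴ * M) x, y⟫ = ⟪x, Matrix.toEuclideanLin (Mᴴ * M) y⟫ := by
  conv_lhs => rw [show (Mᴴ * M) = (Mᴴ * M)ᴴ from (gramHerm M).symm]
  rw [Matrix.toEuclideanLin_conjTranspose_eq_adjoint, LinearMap.adjoint_inner_left]

lemma norm_sq_expand (x : EuclideanSpace ℝ (Fin d)) :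
    ‖x‖ ^ 2 = ∑ a, ⟪sBasis M a, x⟫ ^ 2 := by
  rw [← real_inner_self_eq_norm_sq, ← (sBasis M).sum_inner_mul_inner x x]
  congr 1
  ext a
  rw [real_inner_comm x (sBasis M a), sq]

lemma norm_map_sq_expand (x : EuclideanSpace ℝ (Fin d)) :
    ‖Matrix.toEuclideanLin M x‖ ^ 2 = ∑ a, sEig M a * ⟪sBasis M a, x⟫ ^ 2 := by
  rw [← real_inner_self_eq_norm_sq, inner_gram,
    ← (sBasis M).sum_inner_mul_inner x (Matrix.toEuclideanLin (Mᴴ * M) x)]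
  congr 1
  ext a
  have : ⟪sBasis M a, Matrix.toEuclideanLin (Mᴴ * M) x⟫ = sEig M a * ⟪sBasis M a, x⟫ := by
    rw [← gram_selfadjoint, sBasis_eigen, real_inner_smul_left]
  rw [this, real_inner_comm x (sBasis M a)]; ring

lemma rank_toEuclideanLin {m n : Type*} [Fintype m] [Fintype n] [DecidableEq n]
    (B : Matrix m n ℝ) :
    B.rank = Module.finrank ℝ (LinearMap.range (Matrix.toEuclideanLin B)) := by
  rw [Matrix.toEuclideanLin_eq_toLin_orthonormal]
  exact B.rank_eq_finrank_range_toLin _ _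

lemma sval_lower (j : Fin d) (B : Matrix (Fin d) (Fin d) ℝ) (hB : B.rank < j.1 + 1) :
    Real.sqrt (sEig M j) ≤ specNorm (M - B) := by
  classical
  set E := EuclideanSpace ℝ (Fin d)
  set v : Fin (j.1 + 1) → E := fun t => sBasis M (Fin.castLE j.2 t) with hv
  have hvinj : Function.Injective (fun t : Fin (j.1+1) => (Fin.castLE j.2 t)) :=
    fun a b h => Fin.castLE_injective _ h
  have hli : LinearIndependent ℝ v :=
    (sBasis M).orthonormal.linearIndependent.comp _ hvinj
  set U : Submodule ℝ E := Submodule.span ℝ (Set.range v) with hU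
  have hUrank : Module.finrank ℝ U = j.1 + 1 := by
    rw [hU, finrank_span_eq_card hli, Fintype.card_fin]
  set W : Submodule ℝ E := LinearMap.ker (Matrix.toEuclideanLin B) with hW
  have hWrank : Module.finrank ℝ W + B.rank = d := by
    rw [rank_toEuclideanLin, add_comm]
    rw [LinearMap.finrank_range_add_finrank_ker (Matrix.toEuclideanLin B)]
    simp [E]
  have hdim : 0 < Module.finrank ℝ (U ⊓ W : Submodule ℝ E) := by
    have hsup : Module.finrank ℝ (U ⊔ W : Submodule ℝ E) ≤ d := by
      have := Submodule.finrank_le (U ⊔ W : Submodule ℝ E)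
      simpa [E] using this
    have := Submodule.finrank_sup_add_finrank_inf_eq U W
    omega
  obtain ⟨y, hyne⟩ := Module.finrank_pos_iff_exists_ne_zero.mp hdim
  obtain ⟨x, hxUW⟩ := y
  have hxne : x ≠ 0 := by simpa [Submodule.mk_eq_zero] using hyne
  have horthU : ∀ z ∈ U, ∀ a : Fin d, j < a → ⟪sBasis M a, z⟫ = 0 := by
    intro z hz
    induction hz using Submodule.span_induction with
    | mem y hy =>
      intro a ha
      obtain ⟨t, rfl⟩ := hy
      have hne : a ≠ (Fin.castLE j.2 t : Fin d) := by
        intro h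
        have ht : ((Fin.castLE j.2 t : Fin d) : ℕ) ≤ (j : ℕ) := Nat.lt_succ_iff.mp t.2
        rw [h] at ha
        have : (j : ℕ) < ((Fin.castLE j.2 t : Fin d) : ℕ) := ha
        omega
      have h2 := orthonormal_iff_ite.mp (sBasis M).orthonormal a (Fin.castLE j.2 t)
      exact h2.trans (if_neg hne)
    | zero => intro a _; simp
    | add y z hy hz ihy ihz => intro a ha; simp [inner_add_right, ihy a ha, ihz a ha]
    | smul c y hy ih => intro a ha; simp [inner_smul_right, ih a ha]
  have hxU : x ∈ U := hxUW.1
  have hxW : x ∈ W := hxUW.2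
  have horth : ∀ a : Fin d, j < a → ⟪sBasis M a, x⟫ = 0 := horthU x hxU
  have hBx : Matrix.toEuclideanLin B x = 0 := hxW
  have hsub : Matrix.toEuclideanLin (M - B) x = Matrix.toEuclideanLin M x := by
    rw [map_sub]
    simp [hBx]
  have hx2 : sEig M j * ‖x‖ ^ 2 ≤ ‖Matrix.toEuclideanLin M x‖ ^ 2 := by
    rw [norm_map_sq_expand, norm_sq_expand M x, Finset.mul_sum]
    apply Finset.sum_le_sum
    intro a _
    by_cases hja : j < a
    · simp [horth a hja]
    · exact mul_le_mul_of_nonneg_right (sEig_anti M (not_lt.mp hja)) (sq_nonneg _)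
  have hx3 : Real.sqrt (sEig M j) * ‖x‖ ≤ ‖Matrix.toEuclideanLin M x‖ := by
    have h0 : Real.sqrt (sEig M j) * ‖x‖ = Real.sqrt (sEig M j * ‖x‖ ^ 2) := by
      rw [Real.sqrt_mul (sEig_nonneg M j), Real.sqrt_sq (norm_nonneg x)]
    rw [h0, ← Real.sqrt_sq (norm_nonneg (Matrix.toEuclideanLin M x))]
    exact Real.sqrt_le_sqrt hx2
  have hx4 : ‖Matrix.toEuclideanLin M x‖ ≤ specNorm (M - B) * ‖x‖ := by
    rw [← hsub]; exact norm_apply_le _ _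
  have hxpos : 0 < ‖x‖ := norm_pos_iff.mpr hxne
  exact le_of_mul_le_mul_right (hx3.trans hx4) hxpos

lemma sval_upper (j : Fin d) :
    ∃ B : Matrix (Fin d) (Fin d) ℝ, B.rank < j.1 + 1 ∧
      specNorm (M - B) ≤ Real.sqrt (sEig M j) := by
  classical
  set E := EuclideanSpace ℝ (Fin d)
  set Mlin := Matrix.toEuclideanLin M with hMlin
  set Blin : E →ₗ[ℝ] E :=
    ∑ a ∈ Finset.Iio j, (innerₛₗ ℝ (sBasis M a)).smulRight (Mlin (sBasis M a)) with hBlin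
  have hBlin_apply : ∀ x : E, Blin x = ∑ a ∈ Finset.Iio j, ⟪sBasis M a, x⟫ • Mlin (sBasis M a) := by
    intro x
    rw [hBlin, LinearMap.sum_apply]
    rfl
  set B : Matrix (Fin d) (Fin d) ℝ := Matrix.toEuclideanLin.symm Blin with hB
  have hBlin' : Matrix.toEuclideanLin B = Blin := by rw [hB]; exact Matrix.toEuclideanLin.apply_symm_apply Blin
  refine ⟨B, ?_, ?_⟩
  · -- rank bound
    rw [rank_toEuclideanLin, hBlin', Nat.lt_succ_iff]
    have hsub : LinearMap.range Blin ≤ Submodule.span ℝ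
        ((Finset.Iio j).image (fun a => Mlin (sBasis M a)) : Finset E) := by
      rintro y ⟨x, rfl⟩
      rw [hBlin_apply]
      apply Submodule.sum_mem
      intro a ha
      exact Submodule.smul_mem _ _ (Submodule.subset_span (by
        simp only [Finset.coe_image, Set.mem_image, Finset.mem_coe]
        exact ⟨a, ha, rfl⟩))
    calc Module.finrank ℝ (LinearMap.range Blin)
        ≤ Module.finrank ℝ (Submodule.span ℝ
          (((Finset.Iio j).image (fun a => Mlin (sBasis M a)) : Finset E) : Set E)) :=
          Submodule.finrank_mono hsub
      _ ≤ ((Finset.Iio j).image (fun a => Mlin (sBasis M a))).card :=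
          finrank_span_finset_le_card _
      _ ≤ (Finset.Iio j).card := Finset.card_image_le
      _ = j.1 := Fin.card_Iio j
  · -- norm bound
    apply specNorm_le_bound _ (Real.sqrt_nonneg _)
    intro x
    have hsub : Matrix.toEuclideanLin (M - B) x = Mlin (x - ∑ a ∈ Finset.Iio j, ⟪sBasis M a, x⟫ • sBasis M a) := by
      rw [map_sub, LinearMap.sub_apply, hBlin', hBlin_apply, map_sub, map_sum]
      simp only [_root_.map_smul]
      rfl
    set y : E := x - ∑ a ∈ Finset.Iio j, ⟪sBasis M a, x⟫ • sBasis M a with hy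
    have hinner : ∀ a : Fin d, ⟪sBasis M a, y⟫ = if a < j then 0 else ⟪sBasis M a, x⟫ := by
      intro a
      rw [hy, inner_sub_right, inner_sum]
      have : ∀ b ∈ Finset.Iio j, ⟪sBasis M a, ⟪sBasis M b, x⟫ • sBasis M b⟫
          = if b = a then ⟪sBasis M a, x⟫ else 0 := by
        intro b _
        rw [real_inner_smul_right]
        have h2 := orthonormal_iff_ite.mp (sBasis M).orthonormal a b
        by_cases hab : b = a
        · subst hab; simp at h2 ⊢
        · have : a ≠ b := fun h => hab h.symm
          rw [if_neg this] at h2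
          simp [hab, h2]
      rw [Finset.sum_congr rfl this]
      by_cases haj : a < j
      · rw [Finset.sum_ite_eq' (Finset.Iio j) a]
        simp [haj]
      · rw [Finset.sum_ite_eq' (Finset.Iio j) a]
        simp [haj]
    have hnorm2 : ‖Mlin y‖ ^ 2 ≤ sEig M j * ‖x‖ ^ 2 := by
      rw [norm_map_sq_expand, norm_sq_expand M x, Finset.mul_sum]
      apply Finset.sum_le_sum
      intro a _
      rw [hinner a]
      by_cases haj : a < j
      · simp only [if_pos haj]
        have := mul_nonneg (sEig_nonneg M j) (sq_nonneg (⟪sBasis M a, x⟫))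
        simpa using this
      · simp only [if_neg haj]
        exact mul_le_mul_of_nonneg_right (sEig_anti M (not_lt.mp haj)) (sq_nonneg _)
    rw [hsub]
    have h0 : Real.sqrt (sEig M j) * ‖x‖ = Real.sqrt (sEig M j * ‖x‖ ^ 2) := by
      rw [Real.sqrt_mul (sEig_nonneg M j), Real.sqrt_sq (norm_nonneg x)]
    rw [h0, ← Real.sqrt_sq (norm_nonneg (Mlin y))]
    exact Real.sqrt_le_sqrt hnorm2

theorem sval_sq_eq (j : Fin d) : sval M (j.1 + 1) = Real.sqrt (sEig M j) := by
  apply le_antisymm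
  · obtain ⟨B, hrank, hnorm⟩ := sval_upper M j
    exact (sval_le M B hrank).trans hnorm
  · exact le_sval M (Nat.le_add_left 1 j.1) (fun B hB => sval_lower M j B hB)

lemma vol_eq_prod : vol M = ∏ j : Fin d, Real.sqrt (sEig M j) := by
  have h1 : vol M = ∏ j ∈ Finset.Icc 1 d, sval M j := by
    simp [vol]
  rw [h1]
  rw [show (Finset.Icc 1 d) = Finset.image (fun j : Fin d => j.1 + 1) Finset.univ by
    ext a
    simp only [Finset.mem_Icc, Finset.mem_image, Finset.mem_univ, true_and]
    constructor
    · rintro ⟨h1, h2⟩; exact ⟨⟨a - 1, by omega⟩, by simp; omega⟩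
    · rintro ⟨j, rfl⟩; exact ⟨by omega, by have := j.2; omega⟩]
  rw [Finset.prod_image (by intro a _ b _ h; exact Fin.val_injective (by simp only at h; omega))]
  exact Finset.prod_congr rfl (fun j _ => sval_sq_eq M j)

lemma vol_nonneg' : 0 ≤ vol M := by
  rw [vol_eq_prod]
  exact Finset.prod_nonneg (fun j _ => Real.sqrt_nonneg _)

lemma prod_sEig_eq : ∏ a, sEig M a = M.det ^ 2 := by
  have h1 : ∏ a, sEig M a = ∏ i, (gramHerm M).eigenvalues i := by
    exact Equiv.prod_comp (sPerm M) _
  have h2 := (gramHerm M).det_eq_prod_eigenvalues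
  rw [h1]
  have h3 : (Mᴴ * M).det = M.det ^ 2 := by
    rw [Matrix.det_mul, Matrix.det_conjTranspose, star_trivial, sq]
  rw [← h3, h2]
  norm_num

theorem vol_eq_abs_det : vol M = |M.det| := by
  have h1 : vol M ^ 2 = |M.det| ^ 2 := by
    rw [vol_eq_prod, ← Finset.prod_pow]
    rw [Finset.prod_congr rfl (fun a _ => Real.sq_sqrt (sEig_nonneg M a)), prod_sEig_eq, sq_abs]
  calc vol M = Real.sqrt (vol M ^ 2) := (Real.sqrt_sq (vol_nonneg' M)).symm
    _ = Real.sqrt (|M.det| ^ 2) := by rw [h1]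
    _ = |M.det| := Real.sqrt_sq (abs_nonneg _)

lemma sEig_pos_of_isUnit (hinv : IsUnit M.det) (a : Fin d) : 0 < sEig M a := by
  rcases lt_or_eq_of_le (sEig_nonneg M a) with h | h
  · exact h
  · exfalso
    have hprod : ∏ b, sEig M b = 0 := Finset.prod_eq_zero (Finset.mem_univ a) h.symm
    rw [prod_sEig_eq] at hprod
    have := hinv.ne_zero
    exact this (by nlinarith [sq_nonneg M.det])

theorem specNorm_inv_mul_sval (hd : 0 < d) (hinv : IsUnit M.det) :
    specNorm M⁻¹ * sval M d ≤ 1 := by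
  set j : Fin d := ⟨d - 1, by omega⟩ with hj
  have hsval : sval M d = Real.sqrt (sEig M j) := by
    have := sval_sq_eq M j
    rw [show j.1 + 1 = d by simp [hj]; omega] at this
    exact this
  have hpos : 0 < sEig M j := sEig_pos_of_isUnit M hinv j
  have hsq : 0 < Real.sqrt (sEig M j) := Real.sqrt_pos.mpr hpos
  have hbound : specNorm M⁻¹ ≤ (Real.sqrt (sEig M j))⁻¹ := by
    apply specNorm_le_bound _ (by positivity)
    intro x
    set y := Matrix.toEuclideanLin M⁻¹ x with hy
    have hMy : Matrix.toEuclideanLin M y = x := by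
      rw [hy, ← LinearMap.comp_apply, ← toEuclideanLin_mul, Matrix.mul_nonsing_inv M hinv,
        toEuclideanLin_one, LinearMap.id_apply]
    have h2 : sEig M j * ‖y‖ ^ 2 ≤ ‖Matrix.toEuclideanLin M y‖ ^ 2 := by
      have e1 := norm_sq_expand M y
      have e2 := norm_map_sq_expand M y
      rw [e1, e2, Finset.mul_sum]
      apply Finset.sum_le_sum
      intro a _
      have : a ≤ j := by
        rw [Fin.le_def]
        have := a.2
        simp [hj]
        omega
      exact mul_le_mul_of_nonneg_right (sEig_anti M this) (sq_nonneg _)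
    have h3 : Real.sqrt (sEig M j) * ‖y‖ ≤ ‖x‖ := by
      rw [← hMy]
      have h0 : Real.sqrt (sEig M j) * ‖y‖ = Real.sqrt (sEig M j * ‖y‖ ^ 2) := by
        rw [Real.sqrt_mul (sEig_nonneg M j), Real.sqrt_sq (norm_nonneg y)]
      rw [h0, ← Real.sqrt_sq (norm_nonneg (Matrix.toEuclideanLin M y))]
      exact Real.sqrt_le_sqrt h2
    calc ‖y‖ = (Real.sqrt (sEig M j))⁻¹ * (Real.sqrt (sEig M j) * ‖y‖) := by
          field_simp
      _ ≤ (Real.sqrt (sEig M j))⁻¹ * ‖x‖ := by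
          exact mul_le_mul_of_nonneg_left h3 (by positivity)
  rw [hsval]
  calc specNorm M⁻¹ * Real.sqrt (sEig M j)
      ≤ (Real.sqrt (sEig M j))⁻¹ * Real.sqrt (sEig M j) :=
        mul_le_mul_of_nonneg_right hbound (Real.sqrt_nonneg _)
    _ = 1 := inv_mul_cancel₀ (ne_of_gt hsq)

section DetIdent
variable {k : ℕ}

lemma det_add_mul_det {ι : Type*} [Fintype ι] [DecidableEq ι]
    (A : Matrix (Fin k) (Fin k) ℝ) (hA : IsUnit A.det)
    (U : Matrix (Fin k) ι ℝ) (V : Matrix ι (Fin k) ℝ) :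
    (A + U * V).det = A.det * (1 + V * (A⁻¹ * U)).det := by
  have h1 : A + U * V = A * (1 + A⁻¹ * (U * V)) := by
    rw [Matrix.mul_add, Matrix.mul_one, Matrix.mul_nonsing_inv_cancel_left _ _ hA]
  rw [h1, Matrix.det_mul]
  congr 1
  rw [show A⁻¹ * (U * V) = (A⁻¹ * U) * V by rw [Matrix.mul_assoc],
    Matrix.det_one_add_mul_comm]

lemma hmul_entries (A : Matrix (Fin k) (Fin k) ℝ) (hA : IsUnit A.det) :
    (∀ a b, (∑ y, A a y * A⁻¹ y b) = if a = b then (1:ℝ) else 0) ∧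
    (∀ a b, (∑ x, A⁻¹ a x * A x b) = if a = b then (1:ℝ) else 0) := by
  constructor
  · intro a b
    have h2 : (A * A⁻¹) a b = (1 : Matrix (Fin k) (Fin k) ℝ) a b := by
      rw [Matrix.mul_nonsing_inv A hA]
    simpa [Matrix.mul_apply, Matrix.one_apply] using h2
  · intro a b
    have h2 : (A⁻¹ * A) a b = (1 : Matrix (Fin k) (Fin k) ℝ) a b := by
      rw [Matrix.nonsing_inv_mul A hA]
    simpa [Matrix.mul_apply, Matrix.one_apply] using h2

lemma det_rowReplace (A : Matrix (Fin k) (Fin k) ℝ) (hA : IsUnit A.det)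
    (i : Fin k) (u : Fin k → ℝ) :
    (Matrix.of fun x y => if x = i then u y else A x y).det
      = (∑ y, u y * A⁻¹ y i) * A.det := by
  classical
  obtain ⟨hAG, hGA⟩ := hmul_entries A hA
  set U : Matrix (Fin k) (Fin 1) ℝ := Matrix.of fun x _ => if x = i then (1:ℝ) else 0 with hU
  set V : Matrix (Fin 1) (Fin k) ℝ := Matrix.of fun _ y => u y - A i y with hV
  have hN : (Matrix.of fun x y => if x = i then u y else A x y) = A + U * V := by
    ext x y
    by_cases hx : x = i <;> simp [hU, hV, Matrix.mul_apply, hx] <;> ring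
  rw [hN, det_add_mul_det A hA U V, Matrix.det_fin_one]
  have hGU : ∀ y : Fin k, (A⁻¹ * U) y 0 = A⁻¹ y i := by
    intro y
    simp [hU, Matrix.mul_apply, mul_ite]
  have hentry : ((1 + V * (A⁻¹ * U)) : Matrix (Fin 1) (Fin 1) ℝ) 0 0 = ∑ y, u y * A⁻¹ y i := by
    rw [Matrix.add_apply, Matrix.one_apply_eq, Matrix.mul_apply]
    rw [Finset.sum_congr rfl (fun y _ => by rw [hGU y])]
    have : ∑ y, V 0 y * A⁻¹ y i = (∑ y, u y * A⁻¹ y i) - ∑ y, A i y * A⁻¹ y i := by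
      rw [← Finset.sum_sub_distrib]
      exact Finset.sum_congr rfl (fun y _ => by simp [hV]; ring)
    rw [this, hAG i i]
    simp
  rw [hentry]
  ring
end DetIdent

lemma det_colReplace {k : ℕ} (A : Matrix (Fin k) (Fin k) ℝ) (hA : IsUnit A.det)
    (j : Fin k) (w : Fin k → ℝ) :
    (Matrix.of fun x y => if y = j then w x else A x y).det
      = (∑ x, A⁻¹ j x * w x) * A.det := by
  have hT : (Matrix.of fun x y => if y = j then w x else A x y)
      = (Matrix.of fun x y => if x = j then w y else Aᵀ x y)ᵀ := by
    ext x y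
    simp [Matrix.transpose_apply]
  have hAT : IsUnit Aᵀ.det := by rwa [Matrix.det_transpose]
  rw [hT, Matrix.det_transpose, det_rowReplace Aᵀ hAT j w, Matrix.det_transpose,
    ← Matrix.transpose_nonsing_inv]
  congr 1
  exact Finset.sum_congr rfl (fun x _ => by rw [Matrix.transpose_apply]; ring)

lemma det_bothReplace {k : ℕ} (A : Matrix (Fin k) (Fin k) ℝ) (hA : IsUnit A.det)
    (i j : Fin k) (u w : Fin k → ℝ) (corner : ℝ) :
    (Matrix.of fun x y => if x = i then (if y = j then corner else u y)
        else (if y = j then w x else A x y)).det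
      = ((∑ y, u y * A⁻¹ y i) * (∑ x, A⁻¹ j x * w x)
          + (corner - ∑ y, u y * (∑ x, A⁻¹ y x * w x)) * A⁻¹ j i) * A.det := by
  classical
  obtain ⟨hAG, hGA⟩ := hmul_entries A hA
  set β : ℝ := corner - u j - w i + A i j with hβ
  set U : Matrix (Fin k) (Fin 2) ℝ := Matrix.of fun x b =>
    if b = 0 then (if x = i then (1:ℝ) else 0)
    else (if x = i then corner - u j else w x - A x j) with hU
  set V : Matrix (Fin 2) (Fin k) ℝ := Matrix.of fun b y =>
    if b = 0 then u y - A i y else (if y = j then (1:ℝ) else 0) with hV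
  have hN : (Matrix.of fun x y => if x = i then (if y = j then corner else u y)
      else (if y = j then w x else A x y)) = A + U * V := by
    ext x y
    rw [Matrix.add_apply, Matrix.mul_apply, Fin.sum_univ_two]
    by_cases hx : x = i <;> by_cases hy : y = j <;>
      simp [hU, hV, hx, hy] <;> ring
  rw [hN, det_add_mul_det A hA U V, Matrix.det_fin_two]
  set G := A⁻¹ with hG
  set r : Fin k → ℝ := fun y => ∑ x, G y x * w x with hr
  have hGU0 : ∀ y : Fin k, (G * U) y 0 = G y i := by
    intro y
    simp [hU, Matrix.mul_apply, mul_ite]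
  have hGU1 : ∀ y : Fin k, (G * U) y 1 = r y - (if y = j then 1 else 0) + β * G y i := by
    intro y
    rw [Matrix.mul_apply]
    have hsplit : ∀ x, G y x * U x 1
        = G y x * w x - G y x * A x j + (if x = i then β * G y x else 0) := by
      intro x
      by_cases hx : x = i <;> simp [hU, hx] <;> ring
    rw [Finset.sum_congr rfl (fun x _ => hsplit x)]
    rw [Finset.sum_add_distrib, Finset.sum_sub_distrib]
    rw [show ∑ x, G y x * A x j = if y = j then 1 else 0 from hGA y j,
      Finset.sum_ite_eq' Finset.univ i (fun x => β * G y x)]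
    simp [hr]
  set X := (1 + V * (G * U)) with hX
  have hX00 : X 0 0 = ∑ y, u y * G y i := by
    rw [hX, Matrix.add_apply, Matrix.one_apply_eq, Matrix.mul_apply]
    rw [Finset.sum_congr rfl (fun y _ => by rw [hGU0 y])]
    have : ∑ y, V 0 y * G y i = (∑ y, u y * G y i) - ∑ y, A i y * G y i := by
      rw [← Finset.sum_sub_distrib]
      exact Finset.sum_congr rfl (fun y _ => by simp [hV]; ring)
    rw [this, hAG i i]
    simp
  have hX10 : X 1 0 = G j i := by
    rw [hX, Matrix.add_apply, Matrix.mul_apply]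
    rw [Finset.sum_congr rfl (fun y _ => by rw [hGU0 y])]
    have h1 : (1 : Matrix (Fin 2) (Fin 2) ℝ) 1 0 = 0 := by simp [Matrix.one_apply]
    rw [h1]
    have : ∑ y, V 1 y * G y i = ∑ y, (if y = j then G y i else 0) := by
      refine Finset.sum_congr rfl (fun y _ => ?_)
      by_cases hy : y = j <;> simp [hV, hy]
    rw [this, Finset.sum_ite_eq' Finset.univ j (fun y => G y i)]
    simp
  have hX11 : X 1 1 = r j + β * G j i := by
    rw [hX, Matrix.add_apply, Matrix.one_apply_eq, Matrix.mul_apply]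
    rw [Finset.sum_congr rfl (fun y _ => by rw [hGU1 y])]
    have : ∑ y, V 1 y * (r y - (if y = j then 1 else 0) + β * G y i)
        = ∑ y, (if y = j then r y - 1 + β * G y i else 0) := by
      refine Finset.sum_congr rfl (fun y _ => ?_)
      by_cases hy : y = j <;> simp [hV, hy] <;> ring
    rw [this, Finset.sum_ite_eq' Finset.univ j _]
    simp
    ring
  have hX01 : X 0 1 = (∑ y, u y * r y) - u j + β * (∑ y, u y * G y i) - w i + A i j - β := by
    rw [hX, Matrix.add_apply, Matrix.mul_apply]
    have h1 : (1 : Matrix (Fin 2) (Fin 2) ℝ) 0 1 = 0 := by simp [Matrix.one_apply]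
    rw [h1]
    rw [Finset.sum_congr rfl (fun y _ => by rw [hGU1 y])]
    have hexp : ∀ y : Fin k, V 0 y * (r y - (if y = j then 1 else 0) + β * G y i)
        = (u y * r y - (if y = j then u y else 0) + β * (u y * G y i))
          - (A i y * r y - (if y = j then A i y else 0) + β * (A i y * G y i)) := by
      intro y
      by_cases hy : y = j <;> simp [hV, hy] <;> ring
    rw [Finset.sum_congr rfl (fun y _ => hexp y), Finset.sum_sub_distrib]
    rw [Finset.sum_add_distrib, Finset.sum_add_distrib, Finset.sum_sub_distrib,
      Finset.sum_sub_distrib]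
    rw [Finset.sum_ite_eq' Finset.univ j (fun y => u y), Finset.sum_ite_eq' Finset.univ j
      (fun y => A i y)]
    have hAr : ∑ y, A i y * r y = w i := by
      have h1 : ∑ y, A i y * r y = ∑ x, (∑ y, A i y * G y x) * w x := by
        rw [hr]
        simp only [Finset.mul_sum]
        rw [Finset.sum_comm]
        refine Finset.sum_congr rfl (fun x _ => ?_)
        rw [Finset.sum_mul]
        exact Finset.sum_congr rfl (fun y _ => by ring)
      rw [h1, Finset.sum_congr rfl (fun x _ => by rw [hAG i x])]
      simp
    rw [hAr]
    have hAG2 : ∑ y, A i y * G y i = 1 := by rw [hAG i i]; simp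
    simp only [Finset.mem_univ, if_true]
    rw [show ∑ x, β * (A i x * G x i) = β by rw [← Finset.mul_sum, hAG2, mul_one]]
    rw [show ∑ x, β * (u x * G x i) = β * ∑ y, u y * G y i by rw [← Finset.mul_sum]]
    ring
  rw [hX00, hX01, hX10, hX11]
  have e1 : r j = ∑ x, G j x * w x := rfl
  have e2 : (∑ y, u y * r y) = ∑ y, u y * (∑ x, G y x * w x) := rfl
  rw [show (∑ x, G j x * w x) = r j from e1.symm] at *
  rw [show (∑ y, u y * (∑ x, G y x * w x)) = ∑ y, u y * r y from e2.symm]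
  rw [hβ]
  ring

lemma diffone_cases {k m' : ℕ} (r : Fin k → Fin k ⊕ Fin m')
    (hinj : Function.Injective r)
    (hcard : (Finset.univ.image r \ Finset.univ.image Sum.inl).card ≤ 1) :
    ∃ ρ : Fin k ≃ Fin k,
      ((∀ x, r x = Sum.inl (ρ x)) ∨
        ∃ (i : Fin k) (p : Fin m'), ∀ x, r x = if ρ x = i then Sum.inr p else Sum.inl (ρ x)) := by
  classical
  by_cases hall : ∀ x, ∃ y, r x = Sum.inl y
  · choose ρ hρ using hall
    have hρinj : Function.Injective ρ := by
      intro a b hab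
      apply hinj
      rw [hρ a, hρ b, hab]
    exact ⟨Equiv.ofBijective ρ (Finite.injective_iff_bijective.mp hρinj), Or.inl (fun x => hρ x)⟩
  · push_neg at hall
    obtain ⟨x₀, hx₀⟩ := hall
    obtain ⟨p, hp⟩ : ∃ p, r x₀ = Sum.inr p := by
      cases hr : r x₀ with
      | inl y => exact absurd hr (hx₀ y)
      | inr p => exact ⟨p, rfl⟩
    have huniq : ∀ x, x ≠ x₀ → ∃ y, r x = Sum.inl y := by
      intro x hx
      cases hr : r x with
      | inl y => exact ⟨y, rfl⟩
      | inr p' =>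
        exfalso
        have hmem1 : Sum.inr p ∈ Finset.univ.image r \ Finset.univ.image Sum.inl := by
          simp only [Finset.mem_sdiff, Finset.mem_image, Finset.mem_univ, true_and]
          exact ⟨⟨x₀, hp⟩, by rintro ⟨y, hy⟩; exact Sum.inl_ne_inr hy⟩
        have hmem2 : (Sum.inr p' : Fin k ⊕ Fin m') ∈
            Finset.univ.image r \ Finset.univ.image Sum.inl := by
          simp only [Finset.mem_sdiff, Finset.mem_image, Finset.mem_univ, true_and]
          exact ⟨⟨x, hr⟩, by rintro ⟨y, hy⟩; exact Sum.inl_ne_inr hy⟩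
        have := Finset.card_le_one.mp hcard _ hmem1 _ hmem2
        have hpp : p = p' := by simpa using this
        subst hpp
        exact hx (hinj (hp.trans hr.symm) |>.symm) |>.elim
    choose g hg using fun (x : {x : Fin k // x ≠ x₀}) => huniq x.1 x.2
    have hginj : Function.Injective g := by
      intro a b hab
      have : r a.1 = r b.1 := by rw [hg a, hg b, hab]
      exact Subtype.ext (hinj this)
    set T : Finset (Fin k) := Finset.univ.image g with hT
    have hTcard : T.card < k := by
      rw [hT, Finset.card_image_of_injective _ hginj]
      have h1 : Fintype.card {x : Fin k // x ≠ x₀} < Fintype.card (Fin k) := by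
        apply Fintype.card_subtype_lt (x := x₀)
        simp
      simpa using h1
    have hex : (Finset.univ \ T).Nonempty := by
      rw [Finset.sdiff_nonempty]
      intro hsub
      have := Finset.card_le_card hsub
      simp only [Finset.card_univ, Fintype.card_fin] at this
      omega
    obtain ⟨i, hi⟩ := hex
    have hiT : i ∉ T := (Finset.mem_sdiff.mp hi).2
    set ρ : Fin k → Fin k := fun x => if h : x = x₀ then i else g ⟨x, h⟩ with hρ
    have hρinj : Function.Injective ρ := by
      intro a b hab
      simp only [hρ] at hab
      by_cases ha : a = x₀ <;> by_cases hb : b = x₀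
      · rw [ha, hb]
      · exfalso
        rw [dif_pos ha, dif_neg hb] at hab
        exact hiT (by rw [hT]; exact Finset.mem_image.mpr ⟨⟨b, hb⟩, Finset.mem_univ _, hab.symm⟩)
      · exfalso
        rw [dif_neg ha, dif_pos hb] at hab
        exact hiT (by rw [hT]; exact Finset.mem_image.mpr ⟨⟨a, ha⟩, Finset.mem_univ _, hab⟩)
      · rw [dif_neg ha, dif_neg hb] at hab
        have : g ⟨a, ha⟩ = g ⟨b, hb⟩ := hab
        exact congrArg Subtype.val (hginj this)
    refine ⟨Equiv.ofBijective ρ (Finite.injective_iff_bijective.mp hρinj), Or.inr ⟨i, p, ?_⟩⟩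
    intro x
    simp only [Equiv.ofBijective_apply]
    by_cases hx : x = x₀
    · subst hx
      simp only [hρ, dif_pos rfl, if_pos rfl]
      exact hp
    · have hne : ρ x ≠ i := by
        rw [hρ]
        simp only [dif_neg hx]
        intro h
        exact hiT (by rw [hT]; exact Finset.mem_image.mpr ⟨⟨x, hx⟩, Finset.mem_univ _, h⟩)
      rw [if_neg hne]
      simp only [hρ, dif_neg hx]
      exact hg ⟨x, hx⟩


theorem statement_11 {k m' n' : ℕ} (hm : 1 ≤ m') (hn : 1 ≤ n')
    (A11 : Matrix (Fin k) (Fin k) ℝ) (A12 : Matrix (Fin k) (Fin n') ℝ)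
    (A21 : Matrix (Fin m') (Fin k) ℝ) (A22 : Matrix (Fin m') (Fin n') ℝ)
    (hinv : IsUnit A11.det)
    (μ ν : ℝ) (hμ : 1 ≤ μ) (hν : 1 ≤ ν)
    (h1 : sval (Matrix.fromBlocks A11 A12 A21 A22) k ≤ μ * sval A11 k)
    (h2 : specNorm (A22 - A21 * A11⁻¹ * A12) ≤
      μ * sval (Matrix.fromBlocks A11 A12 A21 A22) (k + 1))
    (h3a : ∀ i j, |(A21 * A11⁻¹) i j| ≤ ν)
    (h3b : ∀ i j, |(A11⁻¹ * A12) i j| ≤ ν) :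
    ∀ (r : Fin k → Fin k ⊕ Fin m') (c : Fin k → Fin k ⊕ Fin n'),
      DiffOne Sum.inl r → DiffOne Sum.inl c →
      vol ((Matrix.fromBlocks A11 A12 A21 A22).submatrix r c) ≤
        (ν ^ 2 + μ ^ 2) * vol A11 := by
  intro r c hr hc
  obtain ⟨hrinj, hrcard⟩ := hr
  obtain ⟨hcinj, hccard⟩ := hc
  obtain ⟨ρ, hrcase⟩ := diffone_cases r hrinj hrcard
  obtain ⟨σ, hccase⟩ := diffone_cases c hcinj hccard
  set A := Matrix.fromBlocks A11 A12 A21 A22 with hA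
  rw [vol_eq_abs_det, vol_eq_abs_det]
  have hfact : A.submatrix r c = (A.submatrix (r ∘ ρ.symm) (c ∘ σ.symm)).submatrix ρ σ := by
    ext x y
    simp [Matrix.submatrix_apply]
  rw [hfact]
  rw [Matrix.abs_det_submatrix_equiv_equiv ρ σ _]
  set N := A.submatrix (r ∘ ρ.symm) (c ∘ σ.symm) with hN
  have hdetnn : (0:ℝ) ≤ |A11.det| := abs_nonneg _
  have hν0 : (0:ℝ) ≤ ν := le_trans zero_le_one hν
  have hμ0 : (0:ℝ) ≤ μ := le_trans zero_le_one hμ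
  rcases hrcase with hrow | ⟨i, p, hrow⟩ <;> rcases hccase with hcol | ⟨j, q, hcol⟩
  · -- no replacement
    have hNe : N = A11 := by
      ext x y
      simp only [hN, Matrix.submatrix_apply, Function.comp_apply, hrow (ρ.symm x),
        hcol (σ.symm y), Equiv.apply_symm_apply, hA, Matrix.fromBlocks_apply₁₁]
    rw [hNe]
    have h12 : (1:ℝ) ≤ ν ^ 2 + μ ^ 2 := by nlinarith
    calc |A11.det| = 1 * |A11.det| := (one_mul _).symm
      _ ≤ (ν ^ 2 + μ ^ 2) * |A11.det| := mul_le_mul_of_nonneg_right h12 hdetnn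
  · -- column replaced only
    have hNe : N = Matrix.of fun x y => if y = j then A12 x q else A11 x y := by
      ext x y
      simp only [hN, Matrix.submatrix_apply, Function.comp_apply, hrow (ρ.symm x),
        hcol (σ.symm y), Equiv.apply_symm_apply, Matrix.of_apply]
      by_cases hy : y = j
      · simp [hy, hA]
      · simp [hy, hA]
    rw [hNe, det_colReplace A11 hinv j (fun x => A12 x q)]
    have hc2 : |∑ x, A11⁻¹ j x * A12 x q| ≤ ν := by
      have := h3b j q
      rwa [Matrix.mul_apply] at this
    rw [abs_mul]
    have : |∑ x, A11⁻¹ j x * A12 x q| ≤ ν ^ 2 + μ ^ 2 := by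
      nlinarith [mul_nonneg hν0 (sub_nonneg.mpr hν), sq_nonneg μ]
    exact mul_le_mul_of_nonneg_right this hdetnn
  · -- row replaced only
    have hNe : N = Matrix.of fun x y => if x = i then A21 p y else A11 x y := by
      ext x y
      simp only [hN, Matrix.submatrix_apply, Function.comp_apply, hrow (ρ.symm x),
        hcol (σ.symm y), Equiv.apply_symm_apply, Matrix.of_apply]
      by_cases hx : x = i
      · simp [hx, hA]
      · simp [hx, hA]
    rw [hNe, det_rowReplace A11 hinv i (fun y => A21 p y)]
    have hc1 : |∑ y, A21 p y * A11⁻¹ y i| ≤ ν := by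
      have := h3a p i
      rwa [Matrix.mul_apply] at this
    rw [abs_mul]
    have : |∑ y, A21 p y * A11⁻¹ y i| ≤ ν ^ 2 + μ ^ 2 := by
      nlinarith [mul_nonneg hν0 (sub_nonneg.mpr hν), sq_nonneg μ]
    exact mul_le_mul_of_nonneg_right this hdetnn
  · -- both replaced
    have hNe : N = Matrix.of fun x y => if x = i then (if y = j then A22 p q else A21 p y)
        else (if y = j then A12 x q else A11 x y) := by
      ext x y
      simp only [hN, Matrix.submatrix_apply, Function.comp_apply, hrow (ρ.symm x),
        hcol (σ.symm y), Equiv.apply_symm_apply, Matrix.of_apply]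
      by_cases hx : x = i <;> by_cases hy : y = j <;> simp [hx, hy, hA]
    rw [hNe, det_bothReplace A11 hinv i j (fun y => A21 p y) (fun x => A12 x q) (A22 p q)]
    have hk : 0 < k := i.pos
    have hk1 : 1 ≤ k := hk
    have hc1 : |∑ y, A21 p y * A11⁻¹ y i| ≤ ν := by
      have := h3a p i
      rwa [Matrix.mul_apply] at this
    have hc2 : |∑ x, A11⁻¹ j x * A12 x q| ≤ ν := by
      have := h3b j q
      rwa [Matrix.mul_apply] at this
    have hSrw : A22 p q - ∑ y, A21 p y * (∑ x, A11⁻¹ y x * A12 x q)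
        = (A22 - A21 * A11⁻¹ * A12) p q := by
      rw [Matrix.sub_apply]
      congr 1
      rw [Matrix.mul_assoc, Matrix.mul_apply]
      refine Finset.sum_congr rfl (fun y _ => ?_)
      rw [Matrix.mul_apply]
    have hsvalnn : 0 ≤ sval A11 k := sval_nonneg _ hk1
    have hS2 : |(A22 - A21 * A11⁻¹ * A12) p q| ≤ μ ^ 2 * sval A11 k := by
      calc |(A22 - A21 * A11⁻¹ * A12) p q| ≤ specNorm (A22 - A21 * A11⁻¹ * A12) :=
            abs_entry_le_specNorm _ p q
        _ ≤ μ * sval A (k + 1) := h2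
        _ ≤ μ * sval A k := mul_le_mul_of_nonneg_left (sval_succ_le A hk1) hμ0
        _ ≤ μ * (μ * sval A11 k) := mul_le_mul_of_nonneg_left h1 hμ0
        _ = μ ^ 2 * sval A11 k := by ring
    have hGbound : |A11⁻¹ j i| ≤ specNorm A11⁻¹ := abs_entry_le_specNorm _ j i
    have hinvmul : specNorm A11⁻¹ * sval A11 k ≤ 1 := specNorm_inv_mul_sval A11 hk hinv
    have hGnn : 0 ≤ specNorm A11⁻¹ := specNorm_nonneg _
    rw [hSrw, abs_mul]
    have hmain : |(∑ y, A21 p y * A11⁻¹ y i) * (∑ x, A11⁻¹ j x * A12 x q)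
        + (A22 - A21 * A11⁻¹ * A12) p q * A11⁻¹ j i| ≤ ν ^ 2 + μ ^ 2 := by
      calc |(∑ y, A21 p y * A11⁻¹ y i) * (∑ x, A11⁻¹ j x * A12 x q)
            + (A22 - A21 * A11⁻¹ * A12) p q * A11⁻¹ j i|
          ≤ |(∑ y, A21 p y * A11⁻¹ y i) * (∑ x, A11⁻¹ j x * A12 x q)|
            + |(A22 - A21 * A11⁻¹ * A12) p q * A11⁻¹ j i| := abs_add_le _ _
        _ = |∑ y, A21 p y * A11⁻¹ y i| * |∑ x, A11⁻¹ j x * A12 x q|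
            + |(A22 - A21 * A11⁻¹ * A12) p q| * |A11⁻¹ j i| := by rw [abs_mul, abs_mul]
        _ ≤ ν * ν + (μ ^ 2 * sval A11 k) * specNorm A11⁻¹ :=
            add_le_add (mul_le_mul hc1 hc2 (abs_nonneg _) hν0)
              (mul_le_mul hS2 hGbound (abs_nonneg _) (by positivity))
        _ ≤ ν ^ 2 + μ ^ 2 := by
            nlinarith [mul_le_mul_of_nonneg_left hinvmul (sq_nonneg μ), hsvalnn, hGnn]
    exact mul_le_mul_of_nonneg_right hmain hdetnn
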